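/- Let Γ be an infinite group with trivial center, H a nontrivial abelian group, 𝓗 = H^(Γ) the restricted direct sum, and 𝓖 = 𝓗 ⋊ (Γ × Γ) the left–right wreath product. Let 𝓗₀ be the kernel of the homomorphism p : 𝓗 → H, p(x) = Σ_{g∈Γ} x_g. Then for every x ∈ 𝓖 with x ∉ 𝓗, the set {z x z⁻¹ | z ∈ 𝓗₀} is infinite. -/

import Mathlib

noncomputable section

/-- The left-right translation bijection `k ↦ g k h⁻¹` of `Γ` associated to `(g,h) ∈ Γ × Γ`. -/
def lrEquiv {Γ : Type*} [Group Γ] (p : Γ × Γ) : Γ ≃ Γ :=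
  (Equiv.mulRight p.2⁻¹).trans (Equiv.mulLeft p.1)

/-- The multiplicative group structure that `AddAut M` carried in the older Mathlib
(composition as multiplication); current Mathlib makes `AddAut M` an additive group instead. -/
instance addAutOldGroup {M : Type*} [Add M] : Group (AddAut M) where
  mul g h := AddEquiv.trans h g
  one := AddEquiv.refl _
  inv := AddEquiv.symm
  mul_assoc _ _ _ := rfl
  one_mul _ := rfl
  mul_one _ := rfl
  inv_mul_cancel := AddEquiv.self_trans_symm

/-- The left-right action of `Γ × Γ` on the base `H^(Γ)` of the wreath product,
`((g,h)·x)_k = x_{g⁻¹ k h}`. -/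
def lrAddAut (Γ H : Type*) [Group Γ] [AddCommGroup H] : (Γ × Γ) →* AddAut (Γ →₀ H) where
  toFun p := (Finsupp.domCongr (lrEquiv p) : (Γ →₀ H) ≃+ (Γ →₀ H))
  map_one' := by
    ext x k
    show x ((lrEquiv 1).symm k) = x k
    congr 1
    simp [lrEquiv] <;> rfl
  map_mul' p q := by
    ext x k
    show x ((lrEquiv (p * q)).symm k) = x ((lrEquiv q).symm ((lrEquiv p).symm k))
    congr 1
    simp only [lrEquiv, Prod.fst_mul, Prod.snd_mul, Equiv.symm_trans_apply,
      Equiv.mulLeft_symm, Equiv.mulRight_symm, Equiv.coe_mulLeft, Equiv.coe_mulRight, inv_inv]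
    group

/-- The same action, as an action on the multiplicative version of `H^(Γ)`. -/
def lrMulAut (Γ H : Type*) [Group Γ] [AddCommGroup H] :
    (Γ × Γ) →* MulAut (Multiplicative (Γ →₀ H)) where
  toFun p := AddEquiv.toMultiplicative (lrAddAut Γ H p)
  map_one' := by
    have h : lrAddAut Γ H 1 = 1 := map_one _
    ext x : 1
    show AddEquiv.toMultiplicative (lrAddAut Γ H 1) x = x
    rw [h]
    rfl
  map_mul' p q := by
    have h : lrAddAut Γ H (p * q) = lrAddAut Γ H p * lrAddAut Γ H q := map_mul _ _ _
    ext x : 1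
    show AddEquiv.toMultiplicative (lrAddAut Γ H (p * q)) x =
      (AddEquiv.toMultiplicative (lrAddAut Γ H p) * AddEquiv.toMultiplicative (lrAddAut Γ H q)) x
    rw [h]
    rfl

/-- The left-right wreath product `H^(Γ) ⋊ (Γ × Γ)`. -/
abbrev LRWreath (Γ H : Type*) [Group Γ] [AddCommGroup H] :=
  SemidirectProduct (Multiplicative (Γ →₀ H)) (Γ × Γ) (lrMulAut Γ H)

/-- The homomorphism `p : H^(Γ) → H` summing all coordinates. -/
def coordSum (Γ H : Type*) [Group Γ] [AddCommGroup H] : (Γ →₀ H) →+ H :=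
  Finsupp.liftAddHom fun _ : Γ => AddMonoidHom.id H

end


open SemidirectProduct Multiplicative Finsupp

lemma nonfix_infinite {Γ : Type*} [Group Γ] [Infinite Γ]
    (hZ : Subgroup.center Γ = ⊥) {g h : Γ} (hgh : ¬(g = 1 ∧ h = 1)) :
    {k : Γ | g * k * h⁻¹ ≠ k}.Infinite := by
  have hiff : ∀ k : Γ, (g * k * h⁻¹ = k) ↔ (g * k = k * h) := fun k =>
    mul_inv_eq_iff_eq_mul
  by_contra hfin
  rw [Set.not_infinite] at hfin
  have hFix : {k : Γ | g * k = k * h}.Infinite := by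
    have h1 : {k : Γ | g * k * h⁻¹ ≠ k}ᶜ.Infinite := hfin.infinite_compl
    have h2 : {k : Γ | g * k * h⁻¹ ≠ k}ᶜ = {k : Γ | g * k = k * h} := by
      ext k; simp [hiff k]
    rwa [h2] at h1
  obtain ⟨k₁, hk₁⟩ := hFix.nonempty
  simp only [Set.mem_setOf_eq] at hk₁
  by_cases hC : ∀ t : Γ, h * t = t * h
  · have hh1 : h = 1 := by
      have : h ∈ Subgroup.center Γ := Subgroup.mem_center_iff.mpr (fun t => (hC t).symm)
      rw [hZ] at this; simpa using this
    have hg1 : g = 1 := by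
      have h2 : g * k₁ = 1 * k₁ := by rw [hk₁, hh1, mul_one, one_mul]
      exact mul_right_cancel h2
    exact hgh ⟨hg1, hh1⟩
  · push_neg at hC
    obtain ⟨t, ht⟩ := hC
    set j : Γ → Γ := fun k => k₁ * t * (k₁⁻¹ * k) with hj
    have hjinj : Function.Injective j := by
      intro a b hab; simpa [hj] using hab
    have himg : j '' {k : Γ | g * k = k * h} ⊆ {k : Γ | g * k * h⁻¹ ≠ k} := by
      rintro _ ⟨k, hk, rfl⟩
      simp only [Set.mem_setOf_eq, hiff] at hk ⊢
      intro hfix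
      simp only [hj, hiff] at hfix
      set s := k₁⁻¹ * k with hs
      have hsh : h * s = s * h := by
        have h1 : k₁ * (h * s) = k₁ * (s * h) := by
          calc k₁ * (h * s) = (g * k₁) * s := by rw [hk₁]; group
          _ = g * k := by rw [hs]; group
          _ = k * h := hk
          _ = k₁ * (s * h) := by rw [hs]; group
        exact mul_left_cancel h1
      have h2 : k₁ * (h * (t * s)) = k₁ * (t * (h * s)) := by
        calc k₁ * (h * (t * s)) = (g * k₁) * (t * s) := by rw [hk₁]; group
        _ = g * (k₁ * t * (k₁⁻¹ * k)) := by rw [hs]; group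
        _ = (k₁ * t * (k₁⁻¹ * k)) * h := hfix
        _ = k₁ * (t * (s * h)) := by rw [hs]; group
        _ = k₁ * (t * (h * s)) := by rw [hsh]
      have h3 : h * (t * s) = t * (h * s) := mul_left_cancel h2
      have h4 : h * t * s = t * h * s := by
        calc h * t * s = h * (t * s) := by group
        _ = t * (h * s) := h3
        _ = t * h * s := by group
      exact ht (mul_right_cancel h4)
    exact (Set.Infinite.mono himg (hFix.image hjinj.injOn)) hfin

/-- if `Γ` is an infinite group with trivial center, `H` a nontrivial abelian
group, `𝓖 = H^(Γ) ⋊ (Γ × Γ)` the left-right wreath product and `𝓗₀` the kernel of the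
coordinate-sum homomorphism `p : H^(Γ) → H`, then every `x ∈ 𝓖` with `x ∉ 𝓗 = H^(Γ)` has an
infinite `𝓗₀`-conjugation orbit. -/
theorem stmt_1 {Γ H : Type*} [Group Γ] [Infinite Γ] [AddCommGroup H] [Nontrivial H]
    (hZ : Subgroup.center Γ = ⊥)
    (x : LRWreath Γ H)
    (hx : x ∉ (SemidirectProduct.inl :
      Multiplicative (Γ →₀ H) →* LRWreath Γ H).range) :
    {y : LRWreath Γ H | ∃ z : Γ →₀ H, coordSum Γ H z = 0 ∧
        y = SemidirectProduct.inl (Multiplicative.ofAdd z) * x *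
            (SemidirectProduct.inl (Multiplicative.ofAdd z))⁻¹}.Infinite := by
  classical
  have hp : x.right ≠ 1 := by
    intro h1
    apply hx
    rw [SemidirectProduct.range_inl_eq_ker_rightHom]
    exact h1
  obtain ⟨c, hc⟩ := exists_ne (0 : H)
  have hgh : ¬(x.right.1 = 1 ∧ x.right.2 = 1) := by
    rintro ⟨h1, h2⟩; exact hp (Prod.ext h1 h2)
  set σ : Γ ≃ Γ := lrEquiv x.right with hσdef
  have hσ : ∀ k, σ k = x.right.1 * k * x.right.2⁻¹ := fun k => by
    simp [hσdef, lrEquiv, mul_assoc]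
  have hnonfix : {k : Γ | σ k ≠ k}.Infinite := by
    have h := nonfix_infinite hZ hgh
    have he : {k : Γ | σ k ≠ k} = {k : Γ | x.right.1 * k * x.right.2⁻¹ ≠ k} := by
      ext k; simp only [Set.mem_setOf_eq, hσ k]
    rwa [he]
  have hAsingle : ∀ a : Γ, lrAddAut Γ H x.right (Finsupp.single a c)
      = Finsupp.single (σ a) c := by
    intro a
    show Finsupp.domCongr (lrEquiv x.right) (Finsupp.single a c) = _
    rw [Finsupp.domCongr_apply, Finsupp.equivMapDomain_single]
  set z : Γ → (Γ →₀ H) := fun m => Finsupp.single m c - Finsupp.single 1 c with hz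
  set F : Γ → LRWreath Γ H := fun m =>
    SemidirectProduct.inl (ofAdd (z m)) * x * (SemidirectProduct.inl (ofAdd (z m)))⁻¹ with hF
  have hzsum : ∀ m, coordSum Γ H (z m) = 0 := by
    intro m
    simp [hz, coordSum, map_sub, Finsupp.liftAddHom_apply_single]
  have hleft : ∀ w : Γ →₀ H,
      (SemidirectProduct.inl (ofAdd w) * x * (SemidirectProduct.inl (ofAdd w))⁻¹).left
        = ofAdd (w + toAdd x.left - (lrAddAut Γ H x.right) w) := by
    intro w
    rw [← map_inv]
    simp only [SemidirectProduct.mul_left, SemidirectProduct.mul_right, left_inl, right_inl,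
      one_mul, map_one, MulAut.one_apply]
    have h0 : (lrMulAut Γ H x.right) (ofAdd w) = ofAdd ((lrAddAut Γ H x.right) w) := rfl
    rw [map_inv, h0, ← ofAdd_toAdd x.left, ← ofAdd_neg, ← ofAdd_add, ← ofAdd_add,
      sub_eq_add_neg]
    rfl
  have hAz : ∀ m, (lrAddAut Γ H x.right) (z m)
      = Finsupp.single (σ m) c - Finsupp.single (σ 1) c := by
    intro m
    simp only [hz]
    rw [map_sub, hAsingle, hAsingle]
  have hkey : ∀ m m', F m = F m' → Finsupp.single m c - Finsupp.single (σ m) c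
      = Finsupp.single m' c - Finsupp.single (σ m') c := by
    intro m m' hmm
    have h1 := congrArg SemidirectProduct.left hmm
    simp only [hF] at h1
    rw [hleft (z m), hleft (z m')] at h1
    have h2 : z m + toAdd x.left - (lrAddAut Γ H x.right) (z m)
        = z m' + toAdd x.left - (lrAddAut Γ H x.right) (z m') :=
      Multiplicative.ofAdd.injective h1
    rw [hAz, hAz] at h2
    simp only [hz] at h2
    have h3 : (Finsupp.single m c - Finsupp.single (σ m) c)
        + (toAdd x.left - Finsupp.single 1 c + Finsupp.single (σ 1) c)
        = (Finsupp.single m' c - Finsupp.single (σ m') c)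
        + (toAdd x.left - Finsupp.single 1 c + Finsupp.single (σ 1) c) := by
      calc _ = Finsupp.single m c - Finsupp.single 1 c + toAdd x.left
            - (Finsupp.single (σ m) c - Finsupp.single (σ 1) c) := by abel
      _ = Finsupp.single m' c - Finsupp.single 1 c + toAdd x.left
            - (Finsupp.single (σ m') c - Finsupp.single (σ 1) c) := h2
      _ = _ := by abel
    exact add_right_cancel h3
  have hval : ∀ m m', σ m ≠ m → F m = F m' → m' = m ∨ m' = σ.symm m := by
    intro m m' hm hFe
    have hv := hkey m m' hFe
    have he := DFunLike.congr_fun hv m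
    rw [Finsupp.sub_apply, Finsupp.sub_apply, Finsupp.single_eq_same,
      Finsupp.single_eq_of_ne' hm] at he
    by_contra hcon
    push_neg at hcon
    obtain ⟨h1, h2⟩ := hcon
    have h3 : σ m' ≠ m := fun h => h2 (by rw [← h, Equiv.symm_apply_apply])
    rw [Finsupp.single_eq_of_ne' h1, Finsupp.single_eq_of_ne' h3] at he
    simp only [sub_zero] at he
    exact hc he
  by_contra hSfin
  rw [Set.not_infinite] at hSfin
  have hsub : F '' {k : Γ | σ k ≠ k} ⊆ {y : LRWreath Γ H | ∃ z : Γ →₀ H,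
      coordSum Γ H z = 0 ∧ y = SemidirectProduct.inl (Multiplicative.ofAdd z) * x *
        (SemidirectProduct.inl (Multiplicative.ofAdd z))⁻¹} := by
    rintro _ ⟨m, hm, rfl⟩
    exact ⟨z m, hzsum m, rfl⟩
  have himgfin : (F '' {k : Γ | σ k ≠ k}).Finite := hSfin.subset hsub
  have hfibers : ∀ y ∈ F '' {k : Γ | σ k ≠ k},
      {m : Γ | σ m ≠ m ∧ F m = y}.Finite := by
    rintro _ ⟨m₀, hm₀, rfl⟩
    apply Set.Finite.subset ((Set.finite_singleton (σ.symm m₀)).insert m₀)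
    rintro m' ⟨hm', hFe⟩
    rcases hval m₀ m' hm₀ hFe.symm with h | h <;> simp [h]
  have hcover : {k : Γ | σ k ≠ k} ⊆
      ⋃ y ∈ F '' {k : Γ | σ k ≠ k}, {m : Γ | σ m ≠ m ∧ F m = y} := by
    intro m hm
    exact Set.mem_biUnion (Set.mem_image_of_mem F hm) ⟨hm, rfl⟩
  exact hnonfix ((himgfin.biUnion hfibers).subset hcover)
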